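/- Let m > n be positive integers with a = m² − n², b = 2mn. If m² + 3mn + n² is a perfect square, then mn(m−n)² · ((mn(m−n)²)² + (a²+b²)·mn(m−n)² + a²b²) is a perfect square, i.e., the curve y² = x³ + (a²+b²)x² + a²b²x has a rational point with x-coordinate mn(m−n)². -/
import Mathlib

theorem stmt_14 (m n a b : ℤ) (hn : 0 < n) (hmn : n < m)
    (ha : a = m ^ 2 - n ^ 2) (hb : b = 2 * m * n)
    (hsq : IsSquare (m ^ 2 + 3 * m * n + n ^ 2)) :
    IsSquare (m * n * (m - n) ^ 2 *
      ((m * n * (m - n) ^ 2) ^ 2 + (a ^ 2 + b ^ 2) * (m * n * (m - n) ^ 2) +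
        a ^ 2 * b ^ 2)) := by
  obtain ⟨r, hr⟩ := hsq
  subst ha hb
  exact ⟨m * n * (m - n) ^ 2 * (m + n) * r,
    by linear_combination (m * n * (m - n) ^ 2 * (m + n)) ^ 2 * hr⟩
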